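/- Let (Σ, V, enc, dec) be a BPE tokenizer, where enc is the BPE encoder determined by an ordered list R of merge rules. Then the tokenizer is non-recovering: for every token sequence s ∈ V⁺ with enc(dec(s)) ≠ s and every token t ∈ V, it holds that enc(dec(s ++ [t])) ≠ s ++ [t]. -/

import Mathlib

namespace BPEStmt2

variable {V : Type*} [DecidableEq V]

/-- Apply the merge rule `r = (t, t', tMerged)` at its leftmost applicable position in the
token sequence, if any: the leftmost adjacent pair `(t, t')` is replaced by `tMerged`. -/
def applyRule (r : V × V × V) : List V → Option (List V)
  | [] => none
  | [_] => none
  | a :: b :: rest =>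
    if a = r.1 ∧ b = r.2.1 then some (r.2.2 :: rest)
    else (applyRule r (b :: rest)).map (a :: ·)

/-- One BPE step: apply the earliest applicable rule in the ordered list `R`, at its
leftmost applicable position. -/
def stepBPE (R : List (V × V × V)) (s : List V) : Option (List V) :=
  R.findSome? fun r => applyRule r s

/-- Repeatedly perform BPE steps (with enough fuel) until no rule applies. -/
def bpeLoop (R : List (V × V × V)) : ℕ → List V → List V
  | 0, s => s
  | n + 1, s =>
    match stepBPE R s with
    | none => s
    | some s' => bpeLoop R n s'

/-- The BPE encoder determined by the ordered list of merge rules `R`: start from the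
sequence of single-character tokens spelling `σ` and repeatedly apply, until no rule
applies, the earliest applicable rule of `R` at its leftmost applicable position.
(Each application shortens the sequence, so `σ.length` steps of fuel suffice.) -/
def bpeEnc {Sig : Type*} (R : List (V × V × V)) (toTok : Sig → V) (σ : List Sig) : List V :=
  bpeLoop R σ.length (σ.map toTok)

section Aux

variable {Sig : Type*} (dec : V → List Sig)

lemma flat_eq_nil (hdec_ne : ∀ t : V, dec t ≠ []) :
    ∀ {z : List V}, z.flatMap dec = [] → z = [] := by
  intro z h
  cases z with
  | nil => rfl
  | cons a w =>
    simp only [List.flatMap_cons, List.append_eq_nil_iff] at h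
    exact absurd h.1 (hdec_ne a)

lemma split_unique (hdec_ne : ∀ t : V, dec t ≠ []) :
    ∀ {u u₀ v v₀ : List V}, u ++ v = u₀ ++ v₀ →
      u.flatMap dec = u₀.flatMap dec → u = u₀ ∧ v = v₀ := by
  intro u
  induction u with
  | nil =>
    intro u₀ v v₀ he hf
    have : u₀ = [] := flat_eq_nil dec hdec_ne hf.symm
    subst this
    exact ⟨rfl, he⟩
  | cons a u ih =>
    intro u₀ v v₀ he hf
    cases u₀ with
    | nil =>
      simp only [List.flatMap_cons, List.flatMap_nil] at hf
      exact absurd (List.append_eq_nil_iff.mp hf).1 (hdec_ne a)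
    | cons a₀ u₀ =>
      simp only [List.cons_append, List.cons.injEq] at he
      obtain ⟨rfl, he⟩ := he
      simp only [List.flatMap_cons] at hf
      have hf' := List.append_cancel_left hf
      obtain ⟨h1, h2⟩ := ih he hf'
      exact ⟨by rw [h1], h2⟩

variable {r : V × V × V}

lemma applyRule_length : ∀ {z z' : List V}, applyRule r z = some z' → z.length = z'.length + 1 := by
  intro z
  induction z with
  | nil => intro z' h; simp [applyRule] at h
  | cons a w ih =>
    intro z' h
    cases w with
    | nil => simp [applyRule] at h
    | cons b rest =>
      rw [applyRule] at h
      split_ifs at h with hc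
      · cases h; simp
      · cases hw : applyRule r (b :: rest) with
        | none => rw [hw] at h; simp at h
        | some w' =>
          rw [hw] at h
          simp only [Option.map_some] at h
          cases h
          have := ih hw
          simp_all

lemma applyRule_flat (hr : dec r.2.2 = dec r.1 ++ dec r.2.1) :
    ∀ {z z' : List V}, applyRule r z = some z' → z'.flatMap dec = z.flatMap dec := by
  intro z
  induction z with
  | nil => intro z' h; simp [applyRule] at h
  | cons a w ih =>
    intro z' h
    cases w with
    | nil => simp [applyRule] at h
    | cons b rest =>
      rw [applyRule] at h
      split_ifs at h with hc
      · cases h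
        obtain ⟨h1, h2⟩ := hc
        subst h1; subst h2
        simp [List.flatMap_cons, hr]
      · cases hw : applyRule r (b :: rest) with
        | none => rw [hw] at h; simp at h
        | some w' =>
          rw [hw] at h
          simp only [Option.map_some] at h
          cases h
          simp [List.flatMap_cons, ih hw]

lemma applyRule_append :
    ∀ {x w : List V} (y : List V), applyRule r x = some w → applyRule r (x ++ y) = some (w ++ y) := by
  intro x
  induction x with
  | nil => intro w y h; simp [applyRule] at h
  | cons a x ih =>
    intro w y h
    cases x with
    | nil => simp [applyRule] at h
    | cons b rest =>
      rw [applyRule] at h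
      rw [List.cons_append, List.cons_append, applyRule]
      split_ifs at h ⊢ with hc
      · cases h; simp
      · cases hw : applyRule r (b :: rest) with
        | none => rw [hw] at h; simp at h
        | some w' =>
          rw [hw] at h
          simp only [Option.map_some] at h
          cases h
          have := ih (w := w') y hw
          rw [List.cons_append] at this
          rw [this]
          simp

lemma applyRule_backsplit (hr : dec r.2.2 = dec r.1 ++ dec r.2.1) :
    ∀ {z u' v' : List V}, applyRule r z = some (u' ++ v') →
      ∃ u v, z = u ++ v ∧ u.flatMap dec = u'.flatMap dec ∧ v.flatMap dec = v'.flatMap dec := by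
  intro z
  induction z with
  | nil => intro u' v' h; simp [applyRule] at h
  | cons a w ih =>
    intro u' v' h
    cases w with
    | nil => simp [applyRule] at h
    | cons b rest =>
      rw [applyRule] at h
      split_ifs at h with hc
      · obtain ⟨h1, h2⟩ := hc
        cases u' with
        | nil =>
          refine ⟨[], a :: b :: rest, rfl, rfl, ?_⟩
          have h' : (r.2.2 :: rest : List V) = v' := by simpa using h
          subst h'
          subst h1 h2; simp [List.flatMap_cons, hr]
        | cons c u'' =>
          have h' : r.2.2 = c ∧ rest = u'' ++ v' := by
            have h2 : (r.2.2 :: rest : List V) = c :: (u'' ++ v') := by simpa using h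
            simpa using h2
          obtain ⟨rfl, rfl⟩ := h'
          refine ⟨a :: b :: u'', v', rfl, ?_, rfl⟩
          subst h1 h2
          simp [List.flatMap_cons, hr]
      · cases hw : applyRule r (b :: rest) with
        | none => rw [hw] at h; simp at h
        | some w' =>
          rw [hw] at h
          simp only [Option.map_some] at h
          have h' : a :: w' = u' ++ v' := Option.some.inj h
          cases u' with
          | nil =>
            refine ⟨[], a :: b :: rest, rfl, rfl, ?_⟩
            have : v' = a :: w' := by simpa using h'.symm
            subst this
            simp [List.flatMap_cons, applyRule_flat dec hr hw]
          | cons a₀ u'' =>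
            simp only [List.cons_append, List.cons.injEq] at h'
            obtain ⟨rfl, h'⟩ := h'
            obtain ⟨u₀, v₀, he, hf1, hf2⟩ := ih (u' := u'') (v' := v') (by rw [hw, h'])
            refine ⟨a :: u₀, v₀, by rw [List.cons_append, he], ?_, hf2⟩
            simp [List.flatMap_cons, hf1]

lemma applyRule_split_cases (hdec_ne : ∀ t : V, dec t ≠ [])
    (hr : dec r.2.2 = dec r.1 ++ dec r.2.1) :
    ∀ {u v u' v' : List V}, applyRule r (u ++ v) = some (u' ++ v') →
      u'.flatMap dec = u.flatMap dec → v'.flatMap dec = v.flatMap dec →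
      u' = u ∨ (applyRule r u = some u' ∧ v' = v) := by
  intro u
  induction u with
  | nil =>
    intro v u' v' h hfu hfv
    left
    exact flat_eq_nil dec hdec_ne (by simpa using hfu)
  | cons a u ih =>
    intro v u' v' h hfu hfv
    cases u with
    | nil =>
      -- u = [a]
      cases v with
      | nil => simp [applyRule] at h
      | cons b rest =>
        rw [List.singleton_append, applyRule] at h
        split_ifs at h with hc
        · -- boundary merge: impossible
          exfalso
          have h' : (r.2.2 :: rest : List V) = u' ++ v' := Option.some.inj h
          cases u' with
          | nil =>
            simp only [List.flatMap_nil, List.flatMap_cons] at hfu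
            exact hdec_ne a (by simpa using hfu.symm)
          | cons c u'' =>
            simp only [List.cons_append, List.cons.injEq] at h'
            obtain ⟨rfl, rfl⟩ := h'
            simp only [List.flatMap_cons, List.flatMap_nil, List.append_nil, hr] at hfu
            obtain ⟨h1, h2⟩ := hc
            subst h1 h2
            have hlen := congrArg List.length hfu
            simp only [List.length_append] at hlen
            have : (dec r.2.1).length = 0 := by omega
            exact hdec_ne r.2.1 (List.eq_nil_of_length_eq_zero this)
        · cases hw : applyRule r (b :: rest) with
          | none => rw [hw] at h; simp at h
          | some w' =>
            rw [hw] at h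
            simp only [Option.map_some] at h
            have h' : a :: w' = u' ++ v' := Option.some.inj h
            cases u' with
            | nil =>
              simp only [List.flatMap_nil, List.flatMap_cons] at hfu
              exact absurd (List.append_eq_nil_iff.mp hfu.symm).1 (hdec_ne a)
            | cons a₀ u'' =>
              simp only [List.cons_append, List.cons.injEq] at h'
              obtain ⟨rfl, h'⟩ := h'
              left
              simp only [List.flatMap_cons, List.flatMap_nil, List.append_nil] at hfu
              have h0 : dec a ++ u''.flatMap dec = dec a ++ [] := by simpa using hfu
              have : u''.flatMap dec = [] := List.append_cancel_left h0
              have : u'' = [] := flat_eq_nil dec hdec_ne this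
              subst this
              rfl
    | cons b u₂ =>
      rw [List.cons_append, List.cons_append, applyRule] at h
      split_ifs at h with hc
      · -- merge of (a,b) inside u
        right
        obtain ⟨h1, h2⟩ := hc
        have h' : (r.2.2 :: (u₂ ++ v) : List V) = u' ++ v' := Option.some.inj h
        cases u' with
        | nil =>
          exfalso
          simp only [List.flatMap_nil, List.flatMap_cons] at hfu
          exact absurd (List.append_eq_nil_iff.mp hfu.symm).1 (hdec_ne a)
        | cons c u'' =>
          simp only [List.cons_append, List.cons.injEq] at h'
          obtain ⟨rfl, h'⟩ := h'
          have hfu' : u''.flatMap dec = u₂.flatMap dec := by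
            simp only [List.flatMap_cons, hr] at hfu
            subst h1 h2
            rw [List.append_assoc] at hfu
            have h3 : dec r.1 ++ (dec r.2.1 ++ u''.flatMap dec)
                = dec r.1 ++ (dec r.2.1 ++ u₂.flatMap dec) := by
              simpa [List.append_assoc] using hfu
            exact List.append_cancel_left (as := dec r.2.1)
              (List.append_cancel_left (as := dec r.1) h3)
          obtain ⟨hu, hv⟩ := split_unique dec hdec_ne h' hfu'.symm
          subst hu hv
          constructor
          · rw [applyRule]
            rw [if_pos ⟨h1, h2⟩]
          · rfl
      · cases hw : applyRule r (b :: (u₂ ++ v)) with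
        | none => rw [hw] at h; simp at h
        | some w' =>
          rw [hw] at h
          simp only [Option.map_some] at h
          have h' : a :: w' = u' ++ v' := Option.some.inj h
          cases u' with
          | nil =>
            exfalso
            simp only [List.flatMap_nil, List.flatMap_cons] at hfu
            exact absurd (List.append_eq_nil_iff.mp hfu.symm).1 (hdec_ne a)
          | cons a₀ u'' =>
            simp only [List.cons_append, List.cons.injEq] at h'
            obtain ⟨rfl, h'⟩ := h'
            have hw' : applyRule r ((b :: u₂) ++ v) = some (u'' ++ v') := by
              rw [List.cons_append, hw, h']
            have hfu' : u''.flatMap dec = (b :: u₂).flatMap dec := by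
              simp only [List.flatMap_cons] at hfu ⊢
              exact List.append_cancel_left (as := dec a) (by simpa using hfu)
            rcases ih hw' hfu' hfv with h1 | ⟨h1, h2⟩
            · left; rw [h1]
            · right
              refine ⟨?_, h2⟩
              rw [applyRule, if_neg hc, h1]
              rfl

variable {R : List (V × V × V)}

lemma stepBPE_mem : ∀ {R : List (V × V × V)} {z z' : List V}, stepBPE R z = some z' →
    ∃ r ∈ R, applyRule r z = some z' := by
  intro R
  induction R with
  | nil => intro z z' h; simp [stepBPE] at h
  | cons r R' ih =>
    intro z z' h
    rw [stepBPE, List.findSome?_cons] at h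
    cases hr : applyRule r z with
    | some w =>
      rw [hr] at h
      simp only at h
      exact ⟨r, List.mem_cons_self, by rw [hr, h]⟩
    | none =>
      rw [hr] at h
      simp only at h
      obtain ⟨r', hm, ha⟩ := ih h
      exact ⟨r', List.mem_cons_of_mem _ hm, ha⟩

lemma stepBPE_none_left {x y : List V} (h : stepBPE R (x ++ y) = none) :
    stepBPE R x = none := by
  rw [stepBPE, List.findSome?_eq_none_iff] at h ⊢
  intro r hr
  cases hx : applyRule r x with
  | none => rfl
  | some w =>
    have h2 := applyRule_append (r := r) y hx
    rw [h r hr] at h2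
    exact nomatch h2

lemma stepBPE_length {z z' : List V} (h : stepBPE R z = some z') :
    z.length = z'.length + 1 := by
  obtain ⟨r, _, hr⟩ := stepBPE_mem h
  exact applyRule_length hr

lemma stepBPE_backsplit (hR : ∀ r ∈ R, dec r.2.2 = dec r.1 ++ dec r.2.1)
    {z u' v' : List V} (h : stepBPE R z = some (u' ++ v')) :
    ∃ u v, z = u ++ v ∧ u.flatMap dec = u'.flatMap dec ∧ v.flatMap dec = v'.flatMap dec := by
  obtain ⟨r, hm, hr⟩ := stepBPE_mem h
  exact applyRule_backsplit dec (hR r hm) hr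

lemma stepBPE_split_cases (hdec_ne : ∀ t : V, dec t ≠ [])
    {u v u' v' : List V} (hfu : u'.flatMap dec = u.flatMap dec)
    (hfv : v'.flatMap dec = v.flatMap dec) :
    ∀ {R : List (V × V × V)}, (∀ r ∈ R, dec r.2.2 = dec r.1 ++ dec r.2.1) →
      stepBPE R (u ++ v) = some (u' ++ v') → u' = u ∨ stepBPE R u = some u' := by
  intro R
  induction R with
  | nil => intro _ h; simp [stepBPE] at h
  | cons r R' ih =>
    intro hR h
    rw [stepBPE, List.findSome?_cons] at h
    cases hr : applyRule r (u ++ v) with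
    | some w =>
      rw [hr] at h
      simp only at h
      have hr' : applyRule r (u ++ v) = some (u' ++ v') := by rw [hr, h]
      rcases applyRule_split_cases dec hdec_ne (hR r (List.mem_cons_self)) hr' hfu hfv with
        h1 | ⟨h1, _⟩
      · exact Or.inl h1
      · right
        rw [stepBPE, List.findSome?_cons, h1]
    | none =>
      rw [hr] at h
      simp only at h
      have hu : applyRule r u = none := by
        cases hx : applyRule r u with
        | none => rfl
        | some w =>
          have h2 := applyRule_append (r := r) v hx
          rw [hr] at h2
          exact nomatch h2
      rcases ih (fun r' hm => hR r' (List.mem_cons_of_mem _ hm)) h with h1 | h1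
      · exact Or.inl h1
      · right
        rw [stepBPE, List.findSome?_cons, hu]
        exact h1

lemma bpeLoop_fix {z : List V} (h : stepBPE R z = none) :
    ∀ n, bpeLoop R n z = z := by
  intro n
  cases n with
  | zero => rfl
  | succ n => simp only [bpeLoop, h]

lemma bpeLoop_add : ∀ (a : ℕ) (b : ℕ) (z : List V),
    bpeLoop R (a + b) z = bpeLoop R b (bpeLoop R a z) := by
  intro a
  induction a with
  | zero => intro b z; simp [bpeLoop]
  | succ a ih =>
    intro b z
    have : a + 1 + b = (a + b) + 1 := by omega
    rw [this]
    cases hstep : stepBPE R z with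
    | none =>
      simp only [bpeLoop, hstep]
      exact (bpeLoop_fix hstep b).symm
    | some z' =>
      simp only [bpeLoop, hstep]
      exact ih b z'

lemma stepBPE_nil : stepBPE R ([] : List V) = none := by
  rw [stepBPE, List.findSome?_eq_none_iff]
  intro r _
  rfl

lemma bpeLoop_fuel : ∀ (n : ℕ) (z : List V), z.length ≤ n →
    stepBPE R (bpeLoop R n z) = none := by
  intro n
  induction n with
  | zero =>
    intro z hz
    have : z = [] := List.eq_nil_of_length_eq_zero (Nat.le_zero.mp hz)
    subst this
    exact stepBPE_nil
  | succ n ih =>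
    intro z hz
    cases hstep : stepBPE R z with
    | none => simp only [bpeLoop, hstep]
    | some z' =>
      simp only [bpeLoop, hstep]
      exact ih z' (by have := stepBPE_length hstep; omega)

lemma bpeLoop_backsplit (hR : ∀ r ∈ R, dec r.2.2 = dec r.1 ++ dec r.2.1) :
    ∀ (n : ℕ) {z u₀ v₀ : List V}, bpeLoop R n z = u₀ ++ v₀ →
      ∃ u v, z = u ++ v ∧ u.flatMap dec = u₀.flatMap dec ∧ v.flatMap dec = v₀.flatMap dec := by
  intro n
  induction n with
  | zero => intro z u₀ v₀ h; exact ⟨u₀, v₀, h, rfl, rfl⟩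
  | succ n ih =>
    intro z u₀ v₀ h
    cases hstep : stepBPE R z with
    | none =>
      simp only [bpeLoop, hstep] at h
      exact ⟨u₀, v₀, h, rfl, rfl⟩
    | some z' =>
      simp only [bpeLoop, hstep] at h
      obtain ⟨u', v', he, hf1, hf2⟩ := ih h
      rw [he] at hstep
      obtain ⟨u, v, he2, hg1, hg2⟩ := stepBPE_backsplit dec hR hstep
      exact ⟨u, v, he2, hg1.trans hf1, hg2.trans hf2⟩

lemma bpeLoop_sim (hdec_ne : ∀ t : V, dec t ≠ [])
    (hR : ∀ r ∈ R, dec r.2.2 = dec r.1 ++ dec r.2.1) {u₀ v₀ : List V} :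
    ∀ (n : ℕ) (u v : List V), bpeLoop R n (u ++ v) = u₀ ++ v₀ →
      u₀.flatMap dec = u.flatMap dec → v₀.flatMap dec = v.flatMap dec →
      ∃ m, bpeLoop R m u = u₀ := by
  intro n
  induction n with
  | zero =>
    intro u v h hfu hfv
    exact ⟨0, (split_unique dec hdec_ne h hfu.symm).1⟩
  | succ n ih =>
    intro u v h hfu hfv
    cases hstep : stepBPE R (u ++ v) with
    | none =>
      simp only [bpeLoop, hstep] at h
      exact ⟨0, (split_unique dec hdec_ne h hfu.symm).1⟩
    | some z' =>
      simp only [bpeLoop, hstep] at h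
      obtain ⟨u', v', he, hf1, hf2⟩ := bpeLoop_backsplit dec hR n h
      rw [he] at hstep h
      obtain ⟨m, hm⟩ := ih u' v' h hf1.symm hf2.symm
      rcases stepBPE_split_cases dec hdec_ne (hf1.trans hfu)
          (hf2.trans hfv) hR hstep with h1 | h1
      · exact ⟨m, h1 ▸ hm⟩
      · exact ⟨m + 1, by simp only [bpeLoop, h1]; exact hm⟩

end Aux

/-- a BPE tokenizer is non-recovering: for every nonempty token sequence `s`
with `enc (dec s) ≠ s` and every token `t`, it holds that
`enc (dec (s ++ [t])) ≠ s ++ [t]`. -/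
theorem bpe_non_recovering
    {Sig : Type*}
    (dec : V → List Sig)
    -- each token decodes to a nonempty string
    (hdec_ne : ∀ t : V, dec t ≠ [])
    -- `V` contains a single-character token for each character of `Sig`
    (toTok : Sig → V) (htok : ∀ c : Sig, dec (toTok c) = [c])
    -- the ordered list of merge rules: each rule `(t, t', tMerged)` replaces the adjacent
    -- pair `(t, t')` by the token `tMerged`, which decodes to `dec t ++ dec t'`
    (R : List (V × V × V)) (hR : ∀ r ∈ R, dec r.2.2 = dec r.1 ++ dec r.2.1)
    -- `enc` is the BPE encoder determined by `R`
    (enc : List Sig → List V) (henc : ∀ σ : List Sig, enc σ = bpeEnc R toTok σ)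
    -- `s` is a nonempty, non-canonical token sequence
    (s : List V) (hs : s ≠ []) (hnc : enc (s.flatMap dec) ≠ s)
    (t : V) :
    enc ((s ++ [t]).flatMap dec) ≠ s ++ [t] := by
  intro hcan
  apply hnc
  rw [henc] at hcan ⊢
  unfold bpeEnc at hcan ⊢
  have hmap : ∀ l : List Sig, (l.map toTok).flatMap dec = l := by
    intro l
    induction l with
    | nil => simp
    | cons c l ih => simp [htok, ih]
  set σ := s.flatMap dec with hσ
  set τ := dec t with hτ
  have hflat : (s ++ [t]).flatMap dec = σ ++ τ := by simp [hσ, hτ]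
  rw [hflat, List.map_append] at hcan
  set u := σ.map toTok with hu
  set v := τ.map toTok with hv
  -- final state is a fixpoint
  have hfix_full : stepBPE R (s ++ [t]) = none := by
    rw [← hcan]
    exact bpeLoop_fuel _ _ (by simp [hu, hv])
  have hsfix : stepBPE R s = none := stepBPE_none_left hfix_full
  -- simulate the left part
  obtain ⟨m, hm⟩ := bpeLoop_sim dec hdec_ne hR _ u v hcan
    (by rw [hmap]) (by simp [hmap, hτ, hv])
  -- conclude with fuel bookkeeping
  have hlen : u.length = σ.length := List.length_map _
  have hfixN : stepBPE R (bpeLoop R σ.length u) = none :=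
    bpeLoop_fuel _ _ (le_of_eq hlen)
  rcases le_or_gt m σ.length with hle | hlt
  · have : σ.length = m + (σ.length - m) := by omega
    rw [this, bpeLoop_add, hm, bpeLoop_fix hsfix]
  · have h2 : m = σ.length + (m - σ.length) := by omega
    rw [h2, bpeLoop_add, bpeLoop_fix hfixN] at hm
    exact hm

end BPEStmt2
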